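/- arXiv:2309.09819 — 3 statements merged into one kernel-verified Lean document; each statement's English description precedes it below -/
import Mathlib

section
/- (Quadratic lower bound, Theorem 4.4.) Under the hypotheses of Lemmas 1 and 2, for all α > 0: Θ(α) ≥ Φ(α), where Φ(α) := 2α(u − ũ)ᵀd(u,ũ,ξ) − α²‖H⁻¹d(u,ũ,ξ)‖²_H. -/
open Matrix

/-- Quadratic lower bound (Theorem 4.4): if the corrector family `u_α` satisfies the
progress bound `Θ(α) ≥ ‖u_α - u‖²_H + 2α(u_α - ũ)ᵀd` (with
`Θ(α) = ‖u - u*‖²_H - ‖u_α - u*‖²_H` and `d = d(u,ũ,ξ)`), then for all `α > 0`,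
`Θ(α) ≥ Φ(α) := 2α(u - ũ)ᵀd - α²‖H⁻¹d‖²_H`. -/
theorem ppcm_quadratic_lower_bound
    (N : ℕ) (H : Matrix (Fin N) (Fin N) ℝ) (hH : H.PosDef)
    (u ut ustar : Fin N → ℝ) (d : Fin N → ℝ)
    (uα : ℝ → (Fin N → ℝ))
    (hbase : ∀ α : ℝ, 0 < α →
      ((u - ustar) ⬝ᵥ H.mulVec (u - ustar)) - ((uα α - ustar) ⬝ᵥ H.mulVec (uα α - ustar))
        ≥ (uα α - u) ⬝ᵥ H.mulVec (uα α - u) + 2 * α * ((uα α - ut) ⬝ᵥ d)) :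
    ∀ α : ℝ, 0 < α →
      ((u - ustar) ⬝ᵥ H.mulVec (u - ustar)) - ((uα α - ustar) ⬝ᵥ H.mulVec (uα α - ustar))
        ≥ 2 * α * ((u - ut) ⬝ᵥ d) - α ^ 2 * (d ⬝ᵥ H⁻¹.mulVec d) := by
  intro α hα
  have hHsymm : Hᵀ = H := hH.isHermitian
  have hsymm : ∀ a b : Fin N → ℝ, a ⬝ᵥ H.mulVec b = b ⬝ᵥ H.mulVec a := by
    intro a b
    rw [Matrix.dotProduct_mulVec, ← Matrix.mulVec_transpose, hHsymm, dotProduct_comm]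
  have hinv : H * H⁻¹ = 1 := Matrix.mul_nonsing_inv H (isUnit_iff_ne_zero.2 hH.det_pos.ne')
  have hd : H.mulVec (H⁻¹.mulVec d) = d := by
    rw [Matrix.mulVec_mulVec, hinv, Matrix.one_mulVec]
  set w : Fin N → ℝ := u - uα α with hw
  set z : Fin N → ℝ := w - α • H⁻¹.mulVec d with hzdef
  have hz : 0 ≤ z ⬝ᵥ H.mulVec z := by simpa using hH.posSemidef.dotProduct_mulVec_nonneg z
  have hexp : z ⬝ᵥ H.mulVec z
      = w ⬝ᵥ H.mulVec w - 2 * α * (w ⬝ᵥ d) + α ^ 2 * (d ⬝ᵥ H⁻¹.mulVec d) := by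
    simp only [hzdef, sub_dotProduct, dotProduct_sub, Matrix.mulVec_sub,
      Matrix.mulVec_smul, smul_dotProduct, dotProduct_smul, hd, smul_eq_mul]
    rw [hsymm (H⁻¹.mulVec d) w, hd, dotProduct_comm (H⁻¹.mulVec d) d,
      dotProduct_comm w d]
    ring
  have hflip : (uα α - u) ⬝ᵥ H.mulVec (uα α - u) = w ⬝ᵥ H.mulVec w := by
    have : uα α - u = -w := by simp [hw]
    rw [this]
    simp [neg_dotProduct, Matrix.mulVec_neg, dotProduct_neg]
  have hlin : (uα α - ut) ⬝ᵥ d = (u - ut) ⬝ᵥ d - w ⬝ᵥ d := by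
    simp only [hw, sub_dotProduct]
    ring
  have hb := hbase α hα
  rw [hflip, hlin] at hb
  nlinarith [hz, hexp]
end

section
/- For H symmetric positive definite, vectors u, ũ, ξ with ‖H⁻¹ξ‖_H ≤ η‖u−ũ‖_H (0 < η < 1), and d = H(u−ũ) − ξ, it holds that 2(u−ũ)ᵀd − ‖H⁻¹d‖²_H ≥ (1−η²)‖u−ũ‖²_H. -/
open Matrix

/-- For `H` symmetric positive definite, `d = H(u - ũ) - ξ` and the criterion
`‖H⁻¹ξ‖_H ≤ η‖u - ũ‖_H` with `η ∈ (0,1)`, one has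
`2(u - ũ)ᵀd - ‖H⁻¹d‖²_H ≥ (1 - η²)‖u - ũ‖²_H`. -/
theorem ppcm_key_inequality
    (N : ℕ) (H : Matrix (Fin N) (Fin N) ℝ) (hH : H.PosDef)
    (η : ℝ) (hη0 : 0 < η) (hη1 : η < 1)
    (u ut ξ : Fin N → ℝ)
    (d : Fin N → ℝ) (hd : d = H.mulVec (u - ut) - ξ)
    (hcrit : Real.sqrt (ξ ⬝ᵥ H⁻¹.mulVec ξ) ≤ η * Real.sqrt ((u - ut) ⬝ᵥ H.mulVec (u - ut))) :
    2 * ((u - ut) ⬝ᵥ d) - d ⬝ᵥ H⁻¹.mulVec d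
      ≥ (1 - η ^ 2) * ((u - ut) ⬝ᵥ H.mulVec (u - ut)) := by
  set w := u - ut with hw
  clear_value w
  have hinv : H.PosDef := hH
  have hHinv : (H⁻¹).PosDef := hH.inv
  have hξnn : 0 ≤ ξ ⬝ᵥ H⁻¹.mulVec ξ := by simpa using hHinv.posSemidef.dotProduct_mulVec_nonneg ξ
  have hwnn : 0 ≤ w ⬝ᵥ H.mulVec w := by simpa using hH.posSemidef.dotProduct_mulVec_nonneg w
  -- square the criterion
  have hsq : ξ ⬝ᵥ H⁻¹.mulVec ξ ≤ η ^ 2 * (w ⬝ᵥ H.mulVec w) := by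
    have h1 : (Real.sqrt (ξ ⬝ᵥ H⁻¹.mulVec ξ)) ^ 2
        ≤ (η * Real.sqrt (w ⬝ᵥ H.mulVec w)) ^ 2 := by
      apply pow_le_pow_left₀ (Real.sqrt_nonneg _) hcrit
    rwa [Real.sq_sqrt hξnn, mul_pow, Real.sq_sqrt hwnn] at h1
  -- invertibility facts
  have hdet : IsUnit H.det := hH.det_pos.ne'.isUnit
  have hHinvH : H⁻¹ * H = 1 := Matrix.nonsing_inv_mul H hdet
  have hHHinv : H * H⁻¹ = 1 := Matrix.mul_nonsing_inv H hdet
  have hHsymm : H.IsSymm := hH.1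
  -- key algebra: 2 w⬝d - d⬝H⁻¹d = w⬝Hw - ξ⬝H⁻¹ξ
  have hdef : d ⬝ᵥ H⁻¹.mulVec d
      = w ⬝ᵥ H.mulVec w - 2 * (w ⬝ᵥ ξ) + ξ ⬝ᵥ H⁻¹.mulVec ξ := by
    have e1 : H⁻¹.mulVec (H.mulVec w) = w := by
      rw [Matrix.mulVec_mulVec, hHinvH, Matrix.one_mulVec]
    have e2 : (H.mulVec w) ⬝ᵥ w = w ⬝ᵥ H.mulVec w := dotProduct_comm _ _
    have hinvT : (H⁻¹)ᵀ = H⁻¹ := by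
      rw [Matrix.transpose_nonsing_inv, hHsymm.eq]
    have e3 : (H.mulVec w) ⬝ᵥ H⁻¹.mulVec ξ = w ⬝ᵥ ξ := by
      rw [Matrix.dotProduct_mulVec, ← hinvT, Matrix.vecMul_transpose, e1]
    have e4 : ξ ⬝ᵥ w = w ⬝ᵥ ξ := dotProduct_comm _ _
    rw [hd, Matrix.mulVec_sub, sub_dotProduct, dotProduct_sub,
      dotProduct_sub, e1, e2, e3, e4]
    ring
  have hwd : w ⬝ᵥ d = w ⬝ᵥ H.mulVec w - w ⬝ᵥ ξ := by
    rw [hd, dotProduct_sub]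
  rw [ge_iff_le, hwd, hdef]
  nlinarith [hsq]
end

section
/- (Contraction of PPCM, Theorem 4.6.) Under the hypotheses of the prediction–correction scheme with criterion ‖H⁻¹ξ‖_H ≤ η‖u−ũ‖_H (η ∈ (0,1)), step size α = γα* with γ ∈ [1,2), and corrector u⁺ = u_{γα*}, one has for every solution u* of VI(Ω,F): ‖u⁺ − u*‖²_H ≤ ‖u − u*‖²_H − (γ(2−γ)(1−η²)/4)‖u − ũ‖²_H. -/
open Matrix

lemma symm_swap {N : ℕ} {H : Matrix (Fin N) (Fin N) ℝ} (hsym : Hᵀ = H)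
    (x y : Fin N → ℝ) : y ⬝ᵥ H.mulVec x = x ⬝ᵥ H.mulVec y := by
  nth_rewrite 1 [← hsym]
  rw [mulVec_transpose, dotProduct_comm, ← dotProduct_mulVec]

lemma cs_lemma {N : ℕ} {H : Matrix (Fin N) (Fin N) ℝ} (hH : H.PosDef)
    (x y : Fin N → ℝ) : (x ⬝ᵥ H.mulVec y) ^ 2 ≤ (x ⬝ᵥ H.mulVec x) * (y ⬝ᵥ H.mulVec y) := by
  have hsym : Hᵀ = H := hH.isHermitian
  have hq : ∀ z : Fin N → ℝ, 0 ≤ z ⬝ᵥ H.mulVec z := fun z => by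
    simpa using hH.posSemidef.dotProduct_mulVec_nonneg z
  by_cases hy : y = 0
  · simp [hy]
  · have hyy : 0 < y ⬝ᵥ H.mulVec y := by simpa using hH.dotProduct_mulVec_pos hy
    set t := (x ⬝ᵥ H.mulVec y) / (y ⬝ᵥ H.mulVec y) with ht
    have h0 := hq (x - t • y)
    have hexp : (x - t • y) ⬝ᵥ H.mulVec (x - t • y)
        = x ⬝ᵥ H.mulVec x - 2 * t * (x ⬝ᵥ H.mulVec y) + t ^ 2 * (y ⬝ᵥ H.mulVec y) := by
      simp only [mulVec_sub, mulVec_smul, dotProduct_sub, sub_dotProduct,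
        smul_dotProduct, dotProduct_smul, smul_eq_mul]
      rw [symm_swap hsym x y]
      ring
    rw [hexp] at h0
    have h2 : t * (x ⬝ᵥ H.mulVec y) * (y ⬝ᵥ H.mulVec y) = (x ⬝ᵥ H.mulVec y) ^ 2 := by
      rw [ht]; field_simp
    have h3 : t ^ 2 * (y ⬝ᵥ H.mulVec y) * (y ⬝ᵥ H.mulVec y) = (x ⬝ᵥ H.mulVec y) ^ 2 := by
      rw [ht]; field_simp
    nlinarith [mul_nonneg h0 hyy.le, h2, h3]

/-- Contraction of PPCM (Theorem 4.6): under the criterion `‖H⁻¹ξ‖_H ≤ η‖u - ũ‖_H`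
(`η ∈ (0,1)`), with `d = H(u - ũ) - ξ`, optimal step `α* = (u - ũ)ᵀd/‖H⁻¹d‖²_H`, the
lower bound `Θ(α) ≥ Φ(α) = 2α(u - ũ)ᵀd - α²‖H⁻¹d‖²_H`, step size `γα*` with `γ ∈ [1,2)`
and corrector `u⁺ = u_{γα*}`, one has for every VI solution `u*`:
`‖u⁺ - u*‖²_H ≤ ‖u - u*‖²_H - (γ(2-γ)(1-η²)/4)‖u - ũ‖²_H`. -/
theorem ppcm_contraction
    (N : ℕ) (H : Matrix (Fin N) (Fin N) ℝ) (hH : H.PosDef)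
    (η : ℝ) (hη0 : 0 < η) (hη1 : η < 1)
    (u ut ξ : Fin N → ℝ) (hne : u ≠ ut)
    (d : Fin N → ℝ) (hd : d = H.mulVec (u - ut) - ξ)
    (hcrit : Real.sqrt (ξ ⬝ᵥ H⁻¹.mulVec ξ) ≤ η * Real.sqrt ((u - ut) ⬝ᵥ H.mulVec (u - ut)))
    (ustar : Fin N → ℝ)
    (uα : ℝ → (Fin N → ℝ))
    (hΘΦ : ∀ α : ℝ, 0 < α →
      ((u - ustar) ⬝ᵥ H.mulVec (u - ustar)) - ((uα α - ustar) ⬝ᵥ H.mulVec (uα α - ustar))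
        ≥ 2 * α * ((u - ut) ⬝ᵥ d) - α ^ 2 * (d ⬝ᵥ H⁻¹.mulVec d))
    (αs : ℝ) (hαs : αs = ((u - ut) ⬝ᵥ d) / (d ⬝ᵥ H⁻¹.mulVec d))
    (γ : ℝ) (hγ1 : 1 ≤ γ) (hγ2 : γ < 2) :
    (uα (γ * αs) - ustar) ⬝ᵥ H.mulVec (uα (γ * αs) - ustar)
      ≤ (u - ustar) ⬝ᵥ H.mulVec (u - ustar)
        - γ * (2 - γ) * (1 - η ^ 2) / 4 * ((u - ut) ⬝ᵥ H.mulVec (u - ut)) := by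
  have hsym : Hᵀ = H := hH.isHermitian
  have hdet : IsUnit H.det := hH.det_pos.ne'.isUnit
  set e : Fin N → ℝ := u - ut with he
  have he0 : e ≠ 0 := sub_ne_zero.mpr hne
  clear_value e
  have ha2 : 0 < e ⬝ᵥ H.mulVec e := by simpa using hH.dotProduct_mulVec_pos he0
  have hb2 : 0 ≤ ξ ⬝ᵥ H⁻¹.mulVec ξ := by simpa using hH.inv.posSemidef.dotProduct_mulVec_nonneg ξ
  set a2 : ℝ := e ⬝ᵥ H.mulVec e with ha2def
  set t : ℝ := e ⬝ᵥ ξ with htdef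
  set b2 : ℝ := ξ ⬝ᵥ H⁻¹.mulVec ξ with hb2def
  -- criterion squared
  have hb2le : b2 ≤ η ^ 2 * a2 := by
    have h2 : (Real.sqrt b2) ^ 2 ≤ (η * Real.sqrt a2) ^ 2 :=
      pow_le_pow_left₀ (Real.sqrt_nonneg _) hcrit 2
    rw [Real.sq_sqrt hb2] at h2
    calc b2 ≤ (η * Real.sqrt a2) ^ 2 := h2
      _ = η ^ 2 * a2 := by rw [mul_pow, Real.sq_sqrt ha2.le]
  -- expansions
  have hp : e ⬝ᵥ d = a2 - t := by
    rw [hd, dotProduct_sub, ha2def, htdef]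
  have hinvd : H⁻¹.mulVec d = e - H⁻¹.mulVec ξ := by
    rw [hd, mulVec_sub, mulVec_mulVec, Matrix.nonsing_inv_mul H hdet, one_mulVec]
  have hHinvξ : H.mulVec (H⁻¹.mulVec ξ) = ξ := by
    rw [mulVec_mulVec, Matrix.mul_nonsing_inv H hdet, one_mulVec]
  have e1 : H.mulVec e ⬝ᵥ e = a2 := by
    rw [dotProduct_comm, ha2def]
  have e2 : H.mulVec e ⬝ᵥ H⁻¹.mulVec ξ = t := by
    rw [dotProduct_comm, symm_swap hsym e (H⁻¹.mulVec ξ), hHinvξ, htdef]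
  have e3 : ξ ⬝ᵥ e = t := by rw [dotProduct_comm, htdef]
  have hq : d ⬝ᵥ H⁻¹.mulVec d = a2 - 2 * t + b2 := by
    rw [hinvd, hd, sub_dotProduct, dotProduct_sub (H.mulVec e), dotProduct_sub ξ,
      e1, e2, e3, ← hb2def]
    ring
  set p : ℝ := e ⬝ᵥ d with hpdef
  set q : ℝ := d ⬝ᵥ H⁻¹.mulVec d with hqdef
  -- Cauchy-Schwarz : t ≤ η * a2
  have hcs : t ^ 2 ≤ a2 * b2 := by
    have hthis := cs_lemma hH e (H⁻¹.mulVec ξ)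
    rw [hHinvξ] at hthis
    have e5 : H⁻¹.mulVec ξ ⬝ᵥ ξ = b2 := by rw [dotProduct_comm, hb2def]
    rwa [e5, ← htdef, ← ha2def] at hthis
  clear_value a2 t b2 p q
  have ht : t ≤ η * a2 := by
    nlinarith [hcs, hb2le, ha2, hη0, sq_nonneg (t - η * a2), sq_nonneg (t + η * a2),
      mul_pos hη0 ha2]
  -- positivity
  have hppos : 0 < p := by rw [hp]; nlinarith
  have hd0 : d ≠ 0 := by
    intro h
    rw [hpdef, h] at hppos
    simp at hppos
  have hqpos : 0 < q := by rw [hqdef]; simpa using hH.inv.dotProduct_mulVec_pos hd0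
  have hαspos : 0 < αs := by rw [hαs]; exact div_pos hppos hqpos
  have hαsq : αs * q = p := by rw [hαs]; field_simp
  have hγαs : 0 < γ * αs := mul_pos (by linarith) hαspos
  have key := hΘΦ (γ * αs) hγαs
  have hΦ : 2 * (γ * αs) * p - (γ * αs) ^ 2 * q = γ * (2 - γ) * (αs * p) := by
    linear_combination (-(γ ^ 2 * αs)) * hαsq
  have hbound : (1 - η ^ 2) / 4 * a2 ≤ αs * p := by
    have hαsp : αs * p = p ^ 2 / q := by rw [hαs]; ring
    rw [hαsp, le_div_iff₀ hqpos, hq, hp]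
    have hη2 : η ^ 2 < 1 := by nlinarith
    have hc : (0:ℝ) ≤ (1 - η ^ 2) * a2 / 4 :=
      div_nonneg (mul_nonneg (by linarith) ha2.le) (by norm_num)
    have h1 : (0:ℝ) ≤ (1 - η ^ 2) * a2 / 4 * (η ^ 2 * a2 - b2) :=
      mul_nonneg hc (by linarith)
    have expand : (a2 - t) ^ 2 - (1 - η ^ 2) / 4 * a2 * (a2 - 2 * t + b2)
        = ((a2 - t) - (1 - η ^ 2) * a2 / 4) ^ 2 + 3 / 16 * ((1 - η ^ 2) * a2) ^ 2
          + (1 - η ^ 2) * a2 / 4 * (η ^ 2 * a2 - b2) := by ring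
    linarith [sq_nonneg ((a2 - t) - (1 - η ^ 2) * a2 / 4),
      sq_nonneg ((1 - η ^ 2) * a2), h1, expand]
  have hγfac : 0 < γ * (2 - γ) := mul_pos (by linarith) (by linarith)
  have hfinal : γ * (2 - γ) * ((1 - η ^ 2) / 4 * a2) ≤ γ * (2 - γ) * (αs * p) :=
    mul_le_mul_of_nonneg_left hbound hγfac.le
  rw [hΦ] at key
  have heq : γ * (2 - γ) * (1 - η ^ 2) / 4 * a2
      = γ * (2 - γ) * ((1 - η ^ 2) / 4 * a2) := by ring
  linarith [key, hfinal, heq]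
end
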